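/- Let C⁽ⁱ⁾ denote the n×n matrix whose (j,k) entry is δ_{ik}δ_{jk} (i.e., the elementary diagonal matrix E_{ii}), and let K ∈ GL_n(ℂ). If [C⁽ⁱ⁾, K̄·C⁽ʲ⁾·K] = 0 for all i, j, then for every i there is exactly one index jᵢ with K_{i,jᵢ} ≠ 0 and K_{jᵢ,i} ≠ 0. -/

import Mathlib

open Matrix

/-- Let `C⁽ⁱ⁾ = E_{ii}` be the elementary diagonal matrices and
`K ∈ GL_n(ℂ)`.  If `[C⁽ⁱ⁾, K̄·C⁽ʲ⁾·K] = 0` for all `i, j`, then for every `i` there is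
exactly one index `j` with `K i j ≠ 0` and `K j i ≠ 0`. -/
theorem statement12 {n : ℕ} (K : Matrix (Fin n) (Fin n) ℂ) (hK : IsUnit K)
    (hcomm : ∀ i j : Fin n,
      Matrix.single i i (1 : ℂ)
          * (K.map (starRingEnd ℂ) * Matrix.single j j (1 : ℂ) * K)
        = (K.map (starRingEnd ℂ) * Matrix.single j j (1 : ℂ) * K)
          * Matrix.single i i (1 : ℂ)) :
    ∀ i : Fin n, ∃! j : Fin n, K i j ≠ 0 ∧ K j i ≠ 0 := by
  -- key consequence of the commutation relations
  have key : ∀ i j b : Fin n, i ≠ b → K i j = 0 ∨ K j b = 0 := by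
    intro i j b hib
    have := congrFun (congrFun (hcomm i j) i) b
    simpa [Matrix.mul_apply, Matrix.single, ite_and, hib, Ne.symm hib] using this
  -- invertibility gives the inverse identities
  have hdet : IsUnit K.det := (Matrix.isUnit_iff_isUnit_det K).mp hK
  have h1 : K * K⁻¹ = 1 := Matrix.mul_nonsing_inv K hdet
  have h2 : K⁻¹ * K = 1 := Matrix.nonsing_inv_mul K hdet
  -- every row of K is nonzero
  have hrow : ∀ i : Fin n, ∃ b, K i b ≠ 0 := by
    intro i
    by_contra h
    push_neg at h
    have := congrFun (congrFun h1 i) i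
    simp [Matrix.mul_apply, h] at this
  -- every column of K is nonzero
  have hcol : ∀ j : Fin n, ∃ a, K a j ≠ 0 := by
    intro j
    by_contra h
    push_neg at h
    have := congrFun (congrFun h2 j) j
    simp [Matrix.mul_apply, h] at this
  intro i
  obtain ⟨b, hb⟩ := hrow i
  -- for any a ≠ b, K a i = 0
  have hzero : ∀ a : Fin n, a ≠ b → K a i = 0 := by
    intro a hab
    rcases key a i b hab with h | h
    · exact h
    · exact absurd h hb
  have hbi : K b i ≠ 0 := by
    obtain ⟨a, ha⟩ := hcol i
    by_cases hab : a = b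
    · exact hab ▸ ha
    · exact absurd (hzero a hab) ha
  refine ⟨b, ⟨hb, hbi⟩, ?_⟩
  intro j' ⟨_, hj'i⟩
  by_contra hne
  exact hj'i (hzero j' hne)
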